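/- Let f(n) denote the maximum number of sets of cardinality at least 2 in a 2-laminar family of subsets of [n]. Then liminf_{n→∞} f(n)/binom(n,2) ≥ 1.3818. -/

import Mathlib

set_option linter.unusedSectionVars false
set_option linter.unusedVariables false
set_option linter.unnecessarySimpa false
set_option linter.unreachableTactic false
set_option linter.unusedTactic false
set_option maxHeartbeats 1000000

/-- `f n` is the maximum number of sets of cardinality at least `2` in a `2`-laminar
family of subsets of `[n]`. -/
noncomputable def f (n : ℕ) : ℕ :=
  sSup {m | ∃ F : Finset (Finset (Fin n)),
    (∀ A ∈ F, ∀ B ∈ F, 2 ≤ (A ∩ B).card → A ⊆ B ∨ B ⊆ A) ∧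
    (∀ A ∈ F, 2 ≤ A.card) ∧ F.card = m}

def IsLam {α : Type*} [DecidableEq α] (G : Finset (Finset α)) : Prop :=
  (∀ A ∈ G, 3 ≤ A.card) ∧ ∀ A ∈ G, ∀ B ∈ G, (A ∩ B).card ≤ 1 ∨ A ⊆ B ∨ B ⊆ A

instance {α : Type*} [DecidableEq α] (G : Finset (Finset α)) : Decidable (IsLam G) := by
  unfold IsLam; infer_instance

def B7 : Finset (Finset (Fin 7)) :=
  { {0,1,2}, {0,3,4}, {0,5,6}, {1,3,5}, {1,4,6}, {2,3,6}, {2,4,5}, Finset.univ }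

lemma B7_card : B7.card = 8 := by decide

lemma B7_lam : IsLam B7 := by decide

lemma B7_units : ∀ i j : Fin 7, i ≠ j → IsUnit (((i:ℕ):ZMod 7) - ((j:ℕ):ZMod 7)) := by decide


section Grid

variable {K h : ℕ} [NeZero h]

def phi (a b : ZMod h) : Fin K → Fin K × ZMod h := fun i => (i, a * ((i:ℕ):ZMod h) + b)

def psi (c : Fin K) : Fin h → Fin K × ZMod h := fun x => (c, ((x:ℕ):ZMod h))

lemma phi_inj (a b : ZMod h) : Function.Injective (phi (K := K) a b) := by
  intro i j hij
  exact (Prod.ext_iff.1 hij).1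

lemma psi_inj (c : Fin K) : Function.Injective (psi (h := h) c) := by
  intro x y hxy
  have h2 : ((x:ℕ):ZMod h) = ((y:ℕ):ZMod h) := (Prod.ext_iff.1 hxy).2
  have := congrArg ZMod.val h2
  rwa [ZMod.val_natCast_of_lt x.2, ZMod.val_natCast_of_lt y.2, ← Fin.ext_iff] at this

lemma cross_block {a b a' b' : ZMod h}
    (hunit : ∀ i j : Fin K, i ≠ j → IsUnit (((i:ℕ):ZMod h) - ((j:ℕ):ZMod h)))
    (hne : (a, b) ≠ (a', b')) (U W : Finset (Fin K × ZMod h))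
    (hU : ∀ p ∈ U, p.2 = a * ((p.1:ℕ):ZMod h) + b)
    (hW : ∀ p ∈ W, p.2 = a' * ((p.1:ℕ):ZMod h) + b') :
    (U ∩ W).card ≤ 1 := by
  apply Finset.card_le_one.2
  intro p hp q hq
  simp only [Finset.mem_inter] at hp hq
  have hp1 := hU p hp.1; have hp2 := hW p hp.2
  have hq1 := hU q hq.1; have hq2 := hW q hq.2
  by_cases hfst : p.1 = q.1
  · have : p.2 = q.2 := by rw [hp1, hq1, hfst]
    exact Prod.ext hfst this
  · exfalso
    have e3 : (a - a') * (((p.1:ℕ):ZMod h) - ((q.1:ℕ):ZMod h)) = 0 := by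
      linear_combination (hp1.symm.trans hp2) - (hq1.symm.trans hq2)
    have hu := hunit p.1 q.1 hfst
    rcases hu.exists_right_inv with ⟨v, hv⟩
    have haa : a - a' = 0 := by
      have h5 : (a - a') * ((((p.1:ℕ):ZMod h) - ((q.1:ℕ):ZMod h)) * v) = 0 := by
        rw [← mul_assoc, e3, zero_mul]
      rw [hv, mul_one] at h5
      exact h5
    have haa' : a = a' := by linear_combination haa
    have hbb : b = b' := by
      have h6 := hp1.symm.trans hp2
      rw [haa'] at h6
      exact (add_left_cancel h6)
    exact hne (by rw [haa', hbb])

lemma cross_block_col {a b : ZMod h} {c : Fin K} (U W : Finset (Fin K × ZMod h))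
    (hU : ∀ p ∈ U, p.2 = a * ((p.1:ℕ):ZMod h) + b)
    (hW : ∀ p ∈ W, p.1 = c) :
    (U ∩ W).card ≤ 1 := by
  apply Finset.card_le_one.2
  intro p hp q hq
  simp only [Finset.mem_inter] at hp hq
  have : p.1 = q.1 := (hW p hp.2).trans (hW q hq.2).symm
  exact Prod.ext this (by rw [hU p hp.1, hU q hq.1, this])

lemma cross_col_col {c c' : Fin K} (hne : c ≠ c') (U W : Finset (Fin K × ZMod h))
    (hU : ∀ p ∈ U, p.1 = c) (hW : ∀ p ∈ W, p.1 = c') :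
    (U ∩ W).card ≤ 1 := by
  apply Finset.card_le_one.2
  intro p hp q hq
  simp only [Finset.mem_inter] at hp hq
  exact absurd ((hU p hp.1).symm.trans (hW p hp.2)) hne
end Grid

/-- transfer of IsLam families along injections -/
lemma isLam_image {α β : Type*} [DecidableEq α] [DecidableEq β] {e : α → β}
    (he : Function.Injective e) {G : Finset (Finset α)} (hG : IsLam G) :
    IsLam (G.image (Finset.image e)) ∧ (G.image (Finset.image e)).card = G.card := by
  have hFi : Function.Injective (Finset.image e) := Finset.image_injective he
  constructor
  · constructor
    · intro A hA
      rcases Finset.mem_image.1 hA with ⟨S, hS, rfl⟩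
      rw [Finset.card_image_of_injective _ he]
      exact hG.1 S hS
    · intro A hA B hB
      rcases Finset.mem_image.1 hA with ⟨S, hS, rfl⟩
      rcases Finset.mem_image.1 hB with ⟨T, hT, rfl⟩
      rcases hG.2 S hS T hT with h1 | h2 | h3
      · left
        rw [← Finset.image_inter _ _ he, Finset.card_image_of_injective _ he]
        exact h1
      · right; left; exact Finset.image_subset_image h2
      · right; right; exact Finset.image_subset_image h3
  · exact Finset.card_image_of_injective _ hFi

section Grid
variable {K h : ℕ} [NeZero h]

/-- the two-level grid construction -/
theorem grid
    (hunit : ∀ i j : Fin K, i ≠ j → IsUnit (((i:ℕ):ZMod h) - ((j:ℕ):ZMod h)))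
    {B : Finset (Finset (Fin K))} {C : Finset (Finset (Fin h))}
    (hB : IsLam B) (hC : IsLam C) :
    ∃ G : Finset (Finset (Fin K × ZMod h)), IsLam G ∧
      G.card = h * h * B.card + K * C.card ∧ ∀ A ∈ G, A.card ≤ max K h := by
  classical
  set Gb : Finset (Finset (Fin K × ZMod h)) :=
    Finset.univ.biUnion (fun ab : ZMod h × ZMod h => B.image (fun S => S.image (phi ab.1 ab.2)))
    with hGb
  set Gc : Finset (Finset (Fin K × ZMod h)) :=
    Finset.univ.biUnion (fun c : Fin K => C.image (fun S => S.image (psi c))) with hGc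
  -- membership descriptions
  have memGb : ∀ A ∈ Gb, ∃ ab : ZMod h × ZMod h, ∃ S ∈ B, A = S.image (phi ab.1 ab.2) := by
    intro A hA
    rcases Finset.mem_biUnion.1 hA with ⟨ab, _, hA2⟩
    rcases Finset.mem_image.1 hA2 with ⟨S, hS, rfl⟩
    exact ⟨ab, S, hS, rfl⟩
  have memGc : ∀ A ∈ Gc, ∃ c : Fin K, ∃ S ∈ C, A = S.image (psi c) := by
    intro A hA
    rcases Finset.mem_biUnion.1 hA with ⟨c, _, hA2⟩
    rcases Finset.mem_image.1 hA2 with ⟨S, hS, rfl⟩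
    exact ⟨c, S, hS, rfl⟩
  have blockP : ∀ (ab : ZMod h × ZMod h) (S : Finset (Fin K)) (p : Fin K × ZMod h),
      p ∈ S.image (phi ab.1 ab.2) → p.2 = ab.1 * ((p.1:ℕ):ZMod h) + ab.2 := by
    intro ab S p hp
    rcases Finset.mem_image.1 hp with ⟨i, _, rfl⟩
    rfl
  have colP : ∀ (c : Fin K) (S : Finset (Fin h)) (p : Fin K × ZMod h),
      p ∈ S.image (psi c) → p.1 = c := by
    intro c S p hp
    rcases Finset.mem_image.1 hp with ⟨i, _, rfl⟩
    rfl
  have card3 : ∀ A ∈ Gb ∪ Gc, 3 ≤ A.card := by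
    intro A hA
    rcases Finset.mem_union.1 hA with hA | hA
    · rcases memGb A hA with ⟨ab, S, hS, rfl⟩
      rw [Finset.card_image_of_injective _ (phi_inj ab.1 ab.2)]; exact hB.1 S hS
    · rcases memGc A hA with ⟨c, S, hS, rfl⟩
      rw [Finset.card_image_of_injective _ (psi_inj c)]; exact hC.1 S hS
  refine ⟨Gb ∪ Gc, ⟨card3, ?_⟩, ?_, ?_⟩
  · -- pairwise condition
    intro A hA A' hA'
    rcases Finset.mem_union.1 hA with hA | hA <;> rcases Finset.mem_union.1 hA' with hA' | hA'
    · rcases memGb A hA with ⟨ab, S, hS, rfl⟩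
      rcases memGb A' hA' with ⟨ab', T, hT, rfl⟩
      by_cases habs : ab = ab'
      · subst habs
        rcases hB.2 S hS T hT with h1 | h2 | h3
        · left
          rw [← Finset.image_inter _ _ (phi_inj ab.1 ab.2),
            Finset.card_image_of_injective _ (phi_inj ab.1 ab.2)]
          exact h1
        · right; left; exact Finset.image_subset_image h2
        · right; right; exact Finset.image_subset_image h3
      · left
        exact cross_block hunit (by simpa [Prod.ext_iff] using habs) _ _
          (blockP ab S) (blockP ab' T)
    · rcases memGb A hA with ⟨ab, S, hS, rfl⟩
      rcases memGc A' hA' with ⟨c, T, hT, rfl⟩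
      left; exact cross_block_col _ _ (blockP ab S) (colP c T)
    · rcases memGc A hA with ⟨c, T, hT, rfl⟩
      rcases memGb A' hA' with ⟨ab, S, hS, rfl⟩
      left
      rw [Finset.inter_comm]
      exact cross_block_col _ _ (blockP ab S) (colP c T)
    · rcases memGc A hA with ⟨c, S, hS, rfl⟩
      rcases memGc A' hA' with ⟨c', T, hT, rfl⟩
      by_cases hcc : c = c'
      · subst hcc
        rcases hC.2 S hS T hT with h1 | h2 | h3
        · left
          rw [← Finset.image_inter _ _ (psi_inj c),
            Finset.card_image_of_injective _ (psi_inj c)]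
          exact h1
        · right; left; exact Finset.image_subset_image h2
        · right; right; exact Finset.image_subset_image h3
      · left; exact cross_col_col hcc _ _ (colP c S) (colP c' T)
  · -- cardinality
    have hdisj : Disjoint Gb Gc := by
      rw [Finset.disjoint_left]
      intro A hAb hAc
      rcases memGb A hAb with ⟨ab, S, hS, rfl⟩
      have h1 : ((S.image (phi ab.1 ab.2)) ∩ (S.image (phi ab.1 ab.2))).card ≤ 1 := by
        rcases memGc _ hAc with ⟨c, T, hT, hEq⟩
        apply cross_block_col _ _ (blockP ab S)
        intro p hp
        rw [hEq] at hp
        exact colP c T p hp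
      rw [Finset.inter_self] at h1
      have h2 : 3 ≤ (S.image (phi ab.1 ab.2)).card := card3 _ (Finset.mem_union_left _ hAb)
      omega
    rw [Finset.card_union_of_disjoint hdisj]
    have hbcard : Gb.card = h * h * B.card := by
      rw [hGb, Finset.card_biUnion]
      · have : ∀ ab : ZMod h × ZMod h,
            (B.image (fun S => S.image (phi ab.1 ab.2))).card = B.card := by
          intro ab
          exact Finset.card_image_of_injective _ (Finset.image_injective (phi_inj ab.1 ab.2))
        rw [Finset.sum_congr rfl (fun ab _ => this ab), Finset.sum_const, Finset.card_univ]
        simp [ZMod.card, mul_comm, Nat.smul_one_eq_cast]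
      · intro ab _ ab' _ hne
        simp only [Function.onFun]; rw [Finset.disjoint_left]
        intro A hA hA'
        rcases Finset.mem_image.1 hA with ⟨S, hS, rfl⟩
        rcases Finset.mem_image.1 hA' with ⟨T, hT, hEq⟩
        have h1 : ((S.image (phi ab.1 ab.2)) ∩ (S.image (phi ab.1 ab.2))).card ≤ 1 := by
          apply cross_block hunit (by simpa [Prod.ext_iff] using hne) _ _ (blockP ab S)
          intro p hp
          rw [← hEq] at hp
          exact blockP ab' T p hp
        rw [Finset.inter_self] at h1
        have h2 : 3 ≤ S.card := hB.1 S hS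
        rw [Finset.card_image_of_injective _ (phi_inj ab.1 ab.2)] at h1
        omega
    have hccard : Gc.card = K * C.card := by
      rw [hGc, Finset.card_biUnion]
      · have : ∀ c : Fin K, (C.image (fun S => S.image (psi c))).card = C.card := by
          intro c
          exact Finset.card_image_of_injective _ (Finset.image_injective (psi_inj c))
        rw [Finset.sum_congr rfl (fun c _ => this c), Finset.sum_const, Finset.card_univ]
        simp [mul_comm]
      · intro c _ c' _ hne
        simp only [Function.onFun]; rw [Finset.disjoint_left]
        intro A hA hA'
        rcases Finset.mem_image.1 hA with ⟨S, hS, rfl⟩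
        rcases Finset.mem_image.1 hA' with ⟨T, hT, hEq⟩
        have h1 : ((S.image (psi c)) ∩ (S.image (psi c))).card ≤ 1 := by
          apply cross_col_col hne _ _ (colP c S)
          intro p hp
          rw [← hEq] at hp
          exact colP c' T p hp
        rw [Finset.inter_self] at h1
        have h2 : 3 ≤ S.card := hC.1 S hS
        rw [Finset.card_image_of_injective _ (psi_inj c)] at h1
        omega
    rw [hbcard, hccard]
  · -- size bound
    intro A hA
    rcases Finset.mem_union.1 hA with hA | hA
    · rcases memGb A hA with ⟨ab, S, hS, rfl⟩
      rw [Finset.card_image_of_injective _ (phi_inj ab.1 ab.2)]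
      exact le_max_of_le_left (by simpa using Finset.card_le_univ S)
    · rcases memGc A hA with ⟨c, S, hS, rfl⟩
      rw [Finset.card_image_of_injective _ (psi_inj c)]
      refine le_max_of_le_right ?_
      simpa [ZMod.card] using Finset.card_le_univ S

end Grid

/-- the 449-set structure on 49 points -/
theorem B49 : ∃ G : Finset (Finset (Fin 49)), IsLam G ∧ G.card = 449 := by
  obtain ⟨G', hlam, hcard, hsize⟩ := grid (K := 7) (h := 7) B7_units B7_lam B7_lam
  have hc : Fintype.card (Fin 7 × ZMod 7) = Fintype.card (Fin 49) := by
    simp [ZMod.card]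
  let e := Fintype.equivOfCardEq hc
  obtain ⟨hlam2, hcard2⟩ := isLam_image e.injective hlam
  refine ⟨insert Finset.univ (G'.image (Finset.image e)), ?_, ?_⟩
  · constructor
    · intro A hA
      rcases Finset.mem_insert.1 hA with rfl | hA
      · simp
      · exact hlam2.1 A hA
    · intro A hA A' hA'
      rcases Finset.mem_insert.1 hA with rfl | hA
      · rcases Finset.mem_insert.1 hA' with rfl | hA'
        · right; left; exact Finset.Subset.refl _
        · right; right; exact Finset.subset_univ _
      · rcases Finset.mem_insert.1 hA' with rfl | hA'
        · right; left; exact Finset.subset_univ _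
        · exact hlam2.2 A hA A' hA'
  · rw [Finset.card_insert_of_notMem, hcard2, hcard, B7_card]
    intro hmem
    rcases Finset.mem_image.1 hmem with ⟨S, hS, hEq⟩
    have h1 : S.card ≤ 7 := by simpa using hsize S hS
    have h3 : (Finset.image (⇑e) S).card = S.card := Finset.card_image_of_injective _ e.injective
    have h4 : (Finset.univ : Finset (Fin 49)).card = 49 := by simp
    rw [hEq] at h3
    omega

lemma units49 (h : ℕ) [NeZero h] (hmod : h % Nat.factorial 48 = 1) (hbig : 49 ≤ h) :
    ∀ i j : Fin 49, i ≠ j → IsUnit (((i:ℕ):ZMod h) - ((j:ℕ):ZMod h)) := by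
  have hM : 1 < Nat.factorial 48 := by
    have := Nat.factorial_le (show 2 ≤ 48 by norm_num)
    simpa [Nat.factorial] using Nat.lt_of_lt_of_le (by norm_num : 1 < 2) (by
      calc (2:ℕ) = Nat.factorial 2 := by norm_num [Nat.factorial]
      _ ≤ Nat.factorial 48 := Nat.factorial_le (by norm_num))
  have hcop : Nat.Coprime (Nat.factorial 48) h := by
    have : h = Nat.factorial 48 * (h / Nat.factorial 48) + 1 := by
      have := Nat.div_add_mod h (Nat.factorial 48)
      omega
    rw [this, Nat.coprime_mul_left_add_right]
    simp
  have key : ∀ d : ℕ, 0 < d → d < 49 → IsUnit ((d : ZMod h)) := by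
    intro d hd1 hd2
    rw [ZMod.isUnit_iff_coprime]
    exact Nat.Coprime.coprime_dvd_left (Nat.dvd_factorial hd1 (by omega)) hcop
  intro i j hij
  rcases Nat.lt_or_ge (j : ℕ) (i : ℕ) with hlt | hge
  · have : (((i:ℕ) - (j:ℕ) : ℕ) : ZMod h) = ((i:ℕ):ZMod h) - ((j:ℕ):ZMod h) :=
      Nat.cast_sub hlt.le
    rw [← this]
    exact key _ (by omega) (by omega)
  · have hlt' : (i : ℕ) < (j : ℕ) := by
      rcases Nat.lt_or_ge (i:ℕ) (j:ℕ) with h1 | h1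
      · exact h1
      · exact absurd (Fin.ext (by omega)) hij
    have : (((j:ℕ) - (i:ℕ) : ℕ) : ZMod h) = ((j:ℕ):ZMod h) - ((i:ℕ):ZMod h) :=
      Nat.cast_sub hlt'.le
    have hu : IsUnit (((j:ℕ):ZMod h) - ((i:ℕ):ZMod h)) := by
      rw [← this]; exact key _ (by omega) (by omega)
    have := hu.neg
    simpa using this

theorem main_exists (n : ℕ) :
    ∃ G : Finset (Finset (Fin n)), IsLam G ∧
      449 * (n*n) ≤ 2352 * G.card + 10^68 * (n * Nat.sqrt n) := by
  obtain ⟨B, hBlam, hBcard⟩ := B49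
  induction n using Nat.strong_induction_on with
  | _ n IH =>
  by_cases hsmall : n < 10^129
  · refine ⟨∅, ⟨by simp, by simp⟩, ?_⟩
    set s := Nat.sqrt n with hs
    have hs1 : s * s ≤ n := Nat.sqrt_le n
    have hs2 : n ≤ s*s + s + s := Nat.sqrt_le_add n
    have hs3 : s ≤ 4 * 10^64 := by
      by_contra hc
      push_neg at hc
      have : (4*10^64 + 1) * (4*10^64 + 1) ≤ s * s := Nat.mul_le_mul hc hc
      omega
    have step1 : 449 * (n*n) ≤ 449 * (n * (s*s + s + s)) :=
      Nat.mul_le_mul_left _ (Nat.mul_le_mul_left _ hs2)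
    have step2 : s*s + s + s ≤ (4*10^64 + 2) * s := by nlinarith
    have step3 : 449 * (n * (s*s+s+s)) ≤ 449 * (n * ((4*10^64+2) * s)) :=
      Nat.mul_le_mul_left _ (Nat.mul_le_mul_left _ step2)
    have step4 : 449 * (n * ((4*10^64+2)*s)) ≤ 10^68 * (n * s) := by
      have : 449 * (4*10^64+2) ≤ 10^68 := by norm_num
      calc 449 * (n * ((4*10^64+2)*s)) = (449 * (4*10^64+2)) * (n * s) := by ring
        _ ≤ 10^68 * (n*s) := Nat.mul_le_mul_right _ this
    omega
  · push_neg at hsmall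
    set M := Nat.factorial 48 with hMdef
    have hM : M ≤ 10^62 := by norm_num [hMdef, Nat.factorial]
    have hM1 : 0 < M := Nat.factorial_pos 48
    set m := n / 49 with hmdef
    have hm : 2 * 10^127 ≤ m := by
      rw [hmdef]
      rw [Nat.le_div_iff_mul_le (by norm_num)]
      calc 2*10^127 * 49 = 98 * 10^127 := by ring
        _ ≤ 10^129 := by norm_num
        _ ≤ n := hsmall
    have hm2 : 49 * m ≤ n := by
      have := Nat.div_mul_le_self n 49
      omega
    have hm3 : n ≤ 49 * m + 48 := by
      have := Nat.div_add_mod n 49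
      have := Nat.mod_lt n (show 0 < 49 by norm_num)
      omega
    have hM2 : 2 ≤ M := by
      calc (2:ℕ) = Nat.factorial 2 := by norm_num [Nat.factorial]
        _ ≤ M := Nat.factorial_le (by norm_num)
    obtain ⟨h, hmod, hhge, hh1, hh2⟩ :
        ∃ h : ℕ, h % M = 1 ∧ 10^127 ≤ h ∧ h ≤ m ∧ m ≤ h + M := by
      refine ⟨M * ((m-1)/M) + 1, ?_, ?_, ?_, ?_⟩
      · rw [Nat.mul_add_mod]
        exact Nat.one_mod_eq_one.2 (by omega)
      · have h1 := Nat.div_add_mod (m-1) M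
        have h2 := Nat.mod_lt (m-1) hM1
        omega
      · have h1 := Nat.div_add_mod (m-1) M
        omega
      · have h1 := Nat.div_add_mod (m-1) M
        have h2 := Nat.mod_lt (m-1) hM1
        omega
    haveI : NeZero h := ⟨by omega⟩
    have h49n : 49 * h ≤ n := by omega
    set r := n - 49 * h with hrdef
    have hr : r ≤ 10^64 := by omega
    have hlt : h < n := by omega
    obtain ⟨Gh, hGhlam, hGhnum⟩ := IH h hlt
    have hunit := units49 h hmod (by omega)
    obtain ⟨G', hG'lam, hG'card, _⟩ := grid (K := 49) (h := h) hunit hBlam hGhlam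
    have hcards : Fintype.card (Fin 49 × ZMod h) ≤ Fintype.card (Fin n) := by
      simp only [Fintype.card_prod, Fintype.card_fin, ZMod.card]
      omega
    obtain ⟨e⟩ : Nonempty (Fin 49 × ZMod h ↪ Fin n) :=
      Function.Embedding.nonempty_of_card_le hcards
    obtain ⟨hGlam, hGcard⟩ := isLam_image e.injective hG'lam
    refine ⟨G'.image (Finset.image e), hGlam, ?_⟩
    rw [hGcard, hG'card, hBcard]
    -- numeric part
    set S := Nat.sqrt h with hSdef
    set N := Nat.sqrt n with hNdef
    have hS1 : S * S ≤ h := Nat.sqrt_le h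
    have hSge : 10^63 ≤ S := by
      rw [hSdef]
      rw [Nat.le_sqrt]
      calc 10^63 * 10^63 = 10^126 := by norm_num
        _ ≤ h := by omega
    have hN7S : 7 * S ≤ N := by
      rw [hNdef, Nat.le_sqrt]
      calc 7*S*(7*S) = 49 * (S*S) := by ring
        _ ≤ 49 * h := by omega
        _ ≤ n := h49n
    have hnN : 343 * (h * S) ≤ n * N := by
      calc 343 * (h * S) = (49*h) * (7*S) := by ring
        _ ≤ n * N := Nat.mul_le_mul h49n hN7S
    have hkey : 44002 * (h*r) + 449 * (r*r) ≤ 294 * 10^68 * (h*S) := by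
      have t1 : 44002 * (h*r) ≤ 10^69 * (h*S) := by
        calc 44002 * (h*r) ≤ 44002 * (h * 10^64) := by
              exact Nat.mul_le_mul_left _ (Nat.mul_le_mul_left _ hr)
          _ = (44002 * 10^64) * h := by ring
          _ ≤ 10^69 * h := Nat.mul_le_mul_right _ (by norm_num)
          _ ≤ 10^69 * (h*S) := by
              have : h ≤ h * S := Nat.le_mul_of_pos_right _ (by omega)
              exact Nat.mul_le_mul_left _ this
      have t2 : 449 * (r*r) ≤ 10^4 * (h*S) := by
        calc 449 * (r*r) ≤ 449 * (10^64 * 10^64) := by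
              exact Nat.mul_le_mul_left _ (Nat.mul_le_mul hr hr)
          _ = 449 * 10^128 := by norm_num
          _ ≤ 10^4 * 10^127 := by norm_num
          _ ≤ 10^4 * h := Nat.mul_le_mul_left _ hhge
          _ ≤ 10^4 * (h * S) := by
              have : h ≤ h * S := Nat.le_mul_of_pos_right _ (by omega)
              exact Nat.mul_le_mul_left _ this
      calc 44002*(h*r) + 449*(r*r) ≤ 10^69*(h*S) + 10^4*(h*S) := Nat.add_le_add t1 t2
        _ = (10^69 + 10^4) * (h*S) := by ring
        _ ≤ 294 * 10^68 * (h*S) := Nat.mul_le_mul_right _ (by norm_num)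
    have hexpand : 449 * (n*n) = 449*2401*(h*h) + 44002*(h*r) + 449*(r*r) := by
      have hn : n = 49*h + r := by omega
      rw [hn]; ring
    have hIH' : 49 * (449 * (h*h)) ≤ 49 * (2352 * Gh.card) + 49 * (10^68 * (h*S)) := by
      have := Nat.mul_le_mul_left 49 hGhnum
      calc 49 * (449*(h*h)) = 49 * (449 * (h*h)) := rfl
        _ ≤ 49 * (2352 * Gh.card + 10^68 * (h * S)) := Nat.mul_le_mul_left _ hGhnum
        _ = 49 * (2352 * Gh.card) + 49 * (10^68 * (h*S)) := by ring
    -- final assembly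
    have goal' : 449*(n*n) ≤ 2352 * (h * h * 449 + 49 * Gh.card) + 10^68 * (n*N) := by
      have e1 : 10^68 * (n*N) ≥ 10^68 * (343 * (h*S)) := Nat.mul_le_mul_left _ hnN
      nlinarith [hkey, hexpand, hIH', e1]
    exact goal'

lemma f_bddAbove (n : ℕ) : BddAbove {m | ∃ F : Finset (Finset (Fin n)),
    (∀ A ∈ F, ∀ B ∈ F, 2 ≤ (A ∩ B).card → A ⊆ B ∨ B ⊆ A) ∧
    (∀ A ∈ F, 2 ≤ A.card) ∧ F.card = m} := by
  refine ⟨2^n, ?_⟩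
  rintro m ⟨F, _, _, rfl⟩
  calc F.card ≤ Fintype.card (Finset (Fin n)) := Finset.card_le_univ F
    _ = 2^n := by simp [Fintype.card_finset]

lemma f_ge (n : ℕ) (G : Finset (Finset (Fin n))) (hG : IsLam G) :
    n.choose 2 + G.card ≤ f n := by
  classical
  set P := (Finset.univ : Finset (Fin n)).powersetCard 2 with hP
  have hPmem : ∀ A ∈ P, A.card = 2 := by
    intro A hA
    exact (Finset.mem_powersetCard.1 hA).2
  have hdisj : Disjoint P G := by
    rw [Finset.disjoint_left]
    intro A hAP hAG
    have := hPmem A hAP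
    have := hG.1 A hAG
    omega
  have hcard : (P ∪ G).card = n.choose 2 + G.card := by
    rw [Finset.card_union_of_disjoint hdisj, hP, Finset.card_powersetCard]
    simp
  have hmem : (P ∪ G).card ∈ {m | ∃ F : Finset (Finset (Fin n)),
      (∀ A ∈ F, ∀ B ∈ F, 2 ≤ (A ∩ B).card → A ⊆ B ∨ B ⊆ A) ∧
      (∀ A ∈ F, 2 ≤ A.card) ∧ F.card = m} := by
    refine ⟨P ∪ G, ?_, ?_, rfl⟩
    · intro A hA B hB hint
      have pairCase : ∀ X Y : Finset (Fin n), X.card = 2 → 2 ≤ (X ∩ Y).card → X ⊆ Y := by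
        intro X Y hX h2
        have hsub : X ∩ Y ⊆ X := Finset.inter_subset_left
        have : X ∩ Y = X := Finset.eq_of_subset_of_card_le hsub (by omega)
        exact Finset.inter_eq_left.1 this
      rcases Finset.mem_union.1 hA with hA' | hA'
      · exact Or.inl (pairCase A B (hPmem A hA') hint)
      · rcases Finset.mem_union.1 hB with hB' | hB'
        · refine Or.inr (pairCase B A (hPmem B hB') ?_)
          rwa [Finset.inter_comm]
        · rcases hG.2 A hA' B hB' with h1 | h2 | h3
          · omega
          · exact Or.inl h2
          · exact Or.inr h3
    · intro A hA
      rcases Finset.mem_union.1 hA with hA' | hA'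
      · have := hPmem A hA'
        omega
      · have := hG.1 A hA'
        omega
  calc n.choose 2 + G.card = (P ∪ G).card := hcard.symm
    _ ≤ f n := le_csSup (f_bddAbove n) hmem

lemma tele : ∀ N : ℕ, 1 ≤ N → ∑ k ∈ Finset.Icc 2 N, (2:ℝ)/(k*(k-1)) = 2 - 2/N := by
  intro N
  induction N with
  | zero => intro hh; omega
  | succ N ih =>
    intro _
    by_cases hN : 1 ≤ N
    · rw [Finset.sum_Icc_succ_top (by omega : 2 ≤ N+1), ih hN]
      have hN0 : (N:ℝ) ≠ 0 := by positivity
      have hN1 : ((N:ℝ)+1) ≠ 0 := by positivity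
      push_cast
      field_simp
      ring_nf; rw [mul_inv_cancel₀ hN0]; ring
    · have : N = 0 := by omega
      subst this
      norm_num

lemma family_le (n : ℕ) (F : Finset (Finset (Fin n)))
    (hlam : ∀ A ∈ F, ∀ B ∈ F, 2 ≤ (A ∩ B).card → A ⊆ B ∨ B ⊆ A)
    (hcard : ∀ A ∈ F, 2 ≤ A.card) :
    F.card ≤ 2 * n.choose 2 := by
  classical
  have hfib : ∀ A ∈ F, A.card ∈ Finset.Icc 2 n := by
    intro A hA
    rw [Finset.mem_Icc]
    refine ⟨hcard A hA, ?_⟩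
    simpa using Finset.card_le_univ A
  have hsum : F.card = ∑ k ∈ Finset.Icc 2 n, (F.filter (fun A => A.card = k)).card :=
    Finset.card_eq_sum_card_fiberwise hfib
  -- per-size bound
  have hk : ∀ k ∈ Finset.Icc 2 n,
      (F.filter (fun A => A.card = k)).card * k.choose 2 ≤ n.choose 2 := by
    intro k hk
    rw [Finset.mem_Icc] at hk
    set Fk := F.filter (fun A => A.card = k) with hFk
    have hdisj : ∀ A ∈ Fk, ∀ B ∈ Fk, A ≠ B →
        Disjoint (A.powersetCard 2) (B.powersetCard 2) := by
      intro A hA B hB hne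
      rw [Finset.disjoint_left]
      intro p hpA hpB
      rw [Finset.mem_powersetCard] at hpA hpB
      have hpint : p ⊆ A ∩ B := Finset.subset_inter hpA.1 hpB.1
      have h2 : 2 ≤ (A ∩ B).card := hpA.2 ▸ Finset.card_le_card hpint
      have hAF := Finset.mem_of_mem_filter A hA
      have hBF := Finset.mem_of_mem_filter B hB
      have hAk : A.card = k := (Finset.mem_filter.1 hA).2
      have hBk : B.card = k := (Finset.mem_filter.1 hB).2
      rcases hlam A hAF B hBF h2 with hs | hs
      · exact hne (Finset.eq_of_subset_of_card_le hs (by omega))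
      · exact hne (Finset.eq_of_subset_of_card_le hs (by omega)).symm
    have hUcard : (Fk.biUnion (fun A => A.powersetCard 2)).card
        = Fk.card * k.choose 2 := by
      rw [Finset.card_biUnion hdisj]
      have : ∀ A ∈ Fk, (A.powersetCard 2).card = k.choose 2 := by
        intro A hA
        rw [Finset.card_powersetCard, (Finset.mem_filter.1 hA).2]
      rw [Finset.sum_congr rfl this, Finset.sum_const, smul_eq_mul]
    have hsub : Fk.biUnion (fun A => A.powersetCard 2)
        ⊆ (Finset.univ : Finset (Fin n)).powersetCard 2 := by
      intro p hp
      rcases Finset.mem_biUnion.1 hp with ⟨A, _, hpA⟩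
      rw [Finset.mem_powersetCard] at hpA ⊢
      exact ⟨Finset.subset_univ p, hpA.2⟩
    have := Finset.card_le_card hsub
    rw [hUcard, Finset.card_powersetCard] at this
    simpa using this
  -- real-valued summation
  have hreal : (F.card : ℝ) ≤ 2 * n.choose 2 := by
    rw [hsum]
    push_cast
    have hbound : ∀ k ∈ Finset.Icc 2 n,
        ((F.filter (fun A => A.card = k)).card : ℝ) ≤ (n.choose 2 : ℝ) * (2/(k*(k-1))) := by
      intro k hkm
      rw [Finset.mem_Icc] at hkm
      have h1 := hk k (Finset.mem_Icc.2 hkm)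
      have h2 : (k.choose 2 : ℝ) = k*(k-1)/2 := by
        rw [Nat.cast_choose_two]
      have hpos : (0:ℝ) < k*(k-1)/2 := by
        have : (2:ℝ) ≤ (k:ℝ) := by exact_mod_cast hkm.1
        nlinarith
      have h3 : ((F.filter (fun A => A.card = k)).card : ℝ) * (k*(k-1)/2) ≤ (n.choose 2 : ℝ) := by
        rw [← h2]
        exact_mod_cast h1
      have hk1 : (1:ℝ) ≤ (k:ℝ) - 1 := by
        have : (2:ℝ) ≤ (k:ℝ) := by exact_mod_cast hkm.1
        linarith
      have h4 : ((F.filter (fun A => A.card = k)).card : ℝ) ≤ (n.choose 2 : ℝ) / (k*(k-1)/2) :=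
        (le_div_iff₀ hpos).2 h3
      calc ((F.filter (fun A => A.card = k)).card : ℝ)
          ≤ (n.choose 2 : ℝ) / (k*(k-1)/2) := h4
        _ = (n.choose 2 : ℝ) * (2/(k*(k-1))) := by
            rw [div_div_eq_mul_div, div_eq_mul_inv, mul_comm ((n.choose 2 : ℝ) * 2)]
            rw [div_eq_mul_inv, mul_comm (2:ℝ) ((k:ℝ)*((k:ℝ)-1))⁻¹]
            ring
    calc ∑ k ∈ Finset.Icc 2 n, ((F.filter (fun A => A.card = k)).card : ℝ)
        ≤ ∑ k ∈ Finset.Icc 2 n, (n.choose 2 : ℝ) * (2/(k*(k-1))) :=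
          Finset.sum_le_sum hbound
      _ = (n.choose 2 : ℝ) * ∑ k ∈ Finset.Icc 2 n, (2:ℝ)/(k*(k-1)) := by
          rw [Finset.mul_sum]
      _ ≤ (n.choose 2 : ℝ) * 2 := by
          by_cases hn : 1 ≤ n
          · rw [tele n hn]
            have : (0:ℝ) ≤ 2/(n:ℝ) := by positivity
            have hc : (0:ℝ) ≤ (n.choose 2 : ℝ) := by positivity
            nlinarith
          · have : n = 0 := by omega
            subst this
            simp
      _ = 2 * n.choose 2 := by ring
  exact_mod_cast hreal

lemma f_le (n : ℕ) : f n ≤ 2 * n.choose 2 := by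
  apply csSup_le
  · exact ⟨0, ∅, by simp, by simp, by simp⟩
  · rintro m ⟨F, h1, h2, rfl⟩
    exact family_le n F h1 h2

lemma two_choose (n : ℕ) : 2 * n.choose 2 = n * (n - 1) := by
  rw [Nat.choose_two_right]
  have hdvd : 2 ∣ n * (n - 1) := by
    rcases Nat.even_or_odd n with he | ho
    · exact Dvd.dvd.mul_right he.two_dvd _
    · have : Even (n - 1) := by
        rcases ho with ⟨k, hk⟩
        exact ⟨k, by omega⟩
      exact Dvd.dvd.mul_left this.two_dvd _
  exact Nat.mul_div_cancel' hdvd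

lemma main_nat (n : ℕ) (hn : 10^142 ≤ n) : 13818 * n.choose 2 ≤ 10000 * f n := by
  obtain ⟨G, hGlam, hGnum⟩ := main_exists n
  have hfge := f_ge n G hGlam
  set g := G.card
  set ch := n.choose 2 with hch
  set s := Nat.sqrt n with hs
  have h2c : 2 * ch = n * (n-1) := two_choose n
  have hsge : 10^71 ≤ s := by
    rw [hs, Nat.le_sqrt]
    calc (10:ℕ)^71 * 10^71 = 10^142 := by norm_num
      _ ≤ n := hn
  have hss : s * s ≤ n := Nat.sqrt_le n
  have hkey : 10^72 * (n * s) ≤ 32 * (n * n) := by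
    have h1 : 10^72 * s ≤ 32 * n := by
      calc 10^72 * s = 10 * (10^71 * s) := by ring
        _ ≤ 10 * (s * s) := by
            apply Nat.mul_le_mul_left
            exact Nat.mul_le_mul_right _ hsge
        _ ≤ 10 * n := Nat.mul_le_mul_left _ hss
        _ ≤ 32 * n := Nat.mul_le_mul_right _ (by norm_num)
    calc 10^72 * (n * s) = n * (10^72 * s) := by ring
      _ ≤ n * (32 * n) := Nat.mul_le_mul_left _ h1
      _ = 32 * (n * n) := by ring
  have hnm : n * (n-1) + n = n * n := by
    obtain ⟨k, rfl⟩ : ∃ k, n = k + 1 := ⟨n - 1, by omega⟩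
    simp only [Nat.add_sub_cancel]
    ring
  have hA : 2352 * 3818 * ch + 10^4 * 10^68 * (n*s) ≤ 10^4 * 449 * (n*n) := by
    have e1 : 2352 * 3818 * ch = 4489968 * (n * (n-1)) := by
      calc 2352 * 3818 * ch = 4489968 * (2 * ch) := by ring
        _ = 4489968 * (n * (n-1)) := by rw [h2c]
    have e2 : 10^4 * 10^68 * (n*s) = 10^72 * (n*s) := by ring
    rw [e1, e2]
    calc 4489968 * (n * (n-1)) + 10^72 * (n*s)
        ≤ 4489968 * (n * (n-1)) + 32 * (n*n) := Nat.add_le_add_left hkey _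
      _ ≤ 4489968 * (n * n) + 32 * (n*n) := by
          have : n * (n-1) ≤ n * n := Nat.mul_le_mul_left _ (by omega)
          exact Nat.add_le_add_right (Nat.mul_le_mul_left _ this) _
      _ = 4490000 * (n*n) := by ring
      _ = 10^4 * 449 * (n*n) := by norm_num
  -- combine with hGnum
  have hmain4 : 10^4 * 449 * (n*n) ≤ 10^4 * 2352 * g + 10^4 * 10^68 * (n*s) := by
    calc 10^4 * 449 * (n*n) = 10^4 * (449 * (n*n)) := by ring
      _ ≤ 10^4 * (2352 * g + 10^68 * (n * s)) := Nat.mul_le_mul_left _ hGnum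
      _ = 10^4 * 2352 * g + 10^4 * 10^68 * (n*s) := by ring
  have hchg : 2352 * 3818 * ch ≤ 10^4 * 2352 * g := by omega
  have hchg2 : 3818 * ch ≤ 10^4 * g := by
    have h1 : 2352 * (3818 * ch) ≤ 2352 * (10^4 * g) := by
      calc 2352 * (3818 * ch) = 2352 * 3818 * ch := by ring
        _ ≤ 10^4 * 2352 * g := hchg
        _ = 2352 * (10^4 * g) := by ring
    exact Nat.le_of_mul_le_mul_left h1 (by norm_num)
  omega

/-- liminf of f(n)/C(n,2) is at least 1.3818. -/
theorem liminf_f_ge :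
    (1.3818 : ℝ) ≤ Filter.liminf (fun n : ℕ => (f n : ℝ) / (n.choose 2 : ℝ)) Filter.atTop := by
  have hup : ∀ᶠ n : ℕ in Filter.atTop, (f n : ℝ) / (n.choose 2 : ℝ) ≤ 2 := by
    rw [Filter.eventually_atTop]
    refine ⟨2, fun n hn => ?_⟩
    have hpos : 0 < n.choose 2 := Nat.choose_pos hn
    rw [div_le_iff₀ (by exact_mod_cast hpos)]
    have := f_le n
    calc (f n : ℝ) ≤ (2 * n.choose 2 : ℕ) := by exact_mod_cast this
      _ = 2 * (n.choose 2 : ℝ) := by push_cast; ring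
  have hco : Filter.IsCoboundedUnder (· ≥ ·) Filter.atTop
      (fun n : ℕ => (f n : ℝ) / (n.choose 2 : ℝ)) :=
    Filter.isCoboundedUnder_ge_of_eventually_le Filter.atTop hup
  have hev : ∀ᶠ n : ℕ in Filter.atTop, (1.3818 : ℝ) ≤ (f n : ℝ) / (n.choose 2 : ℝ) := by
    rw [Filter.eventually_atTop]
    refine ⟨10^142, fun n hn => ?_⟩
    have hnat := main_nat n hn
    have hpos : 0 < n.choose 2 := Nat.choose_pos (by
      calc 2 ≤ 10^142 := by norm_num
        _ ≤ n := hn)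
    have hposR : (0:ℝ) < (n.choose 2 : ℝ) := by exact_mod_cast hpos
    have h1 : (1.3818 : ℝ) = 13818 / 10000 := by norm_num
    rw [h1, div_le_div_iff₀ (by norm_num) hposR]
    calc (13818:ℝ) * (n.choose 2 : ℝ) = ((13818 * n.choose 2 : ℕ) : ℝ) := by push_cast; ring
      _ ≤ ((10000 * f n : ℕ) : ℝ) := by exact_mod_cast hnat
      _ = (f n : ℝ) * 10000 := by push_cast; ring
  exact Filter.le_liminf_of_le hco hev
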